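/- Let (ε_t)_{t≥0} be nonnegative reals with ε_0 = 0, and a_t ∈ (0,1] satisfying the recursion ε_t ≤ (1−a_t)ε_{t−1} + r_t with r_t ≥ 0. Then ∑_{t=1}^T ε_{t−1} ≤ ∑_{t=1}^{T−1}(1/a_{t+1} − 1/a_t)·ε_t − ε_T/a_T + ∑_{t=1}^T r_t/a_t, provided a_t is non-increasing. -/
import Mathlib


open Finset

theorem stmt_16 (T : ℕ) (hT : 1 ≤ T) (ε a r : ℕ → ℝ)
    (hε : ∀ t, 0 ≤ ε t) (hε0 : ε 0 = 0)
    (ha : ∀ t, 0 < a t ∧ a t ≤ 1)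
    (hmono : ∀ t, a (t + 1) ≤ a t)
    (hr : ∀ t, 0 ≤ r t)
    (hrec : ∀ t, 1 ≤ t → t ≤ T → ε t ≤ (1 - a t) * ε (t - 1) + r t) :
    ∑ t ∈ Icc 1 T, ε (t - 1)
      ≤ ∑ t ∈ Icc 1 (T - 1), (1 / a (t + 1) - 1 / a t) * ε t - ε T / a T
        + ∑ t ∈ Icc 1 T, r t / a t := by
  induction T, hT using Nat.le_induction with
  | base =>
    simp only [Nat.sub_self, Icc_self, sum_singleton, show (1:ℕ) - 1 = 0 from rfl,
      Icc_eq_empty_of_lt (by norm_num : (1:ℕ) > 0), sum_empty]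
    have h1 := hrec 1 le_rfl le_rfl
    simp only [Nat.sub_self, hε0, mul_zero, zero_add] at h1
    have hpos := (ha 1).1
    have : ε 1 / a 1 ≤ r 1 / a 1 := div_le_div_of_nonneg_right h1 hpos.le
    rw [hε0]
    linarith
  | succ n hn ih =>
    obtain ⟨m, rfl⟩ : ∃ m, n = m + 1 := ⟨n - 1, by omega⟩
    have hrec' : ∀ t, 1 ≤ t → t ≤ m + 1 → ε t ≤ (1 - a t) * ε (t - 1) + r t :=
      fun t h1 h2 => hrec t h1 (by omega)
    have IH := ih hrec'
    have key : ε (m + 1) ≤ (ε (m + 1) - ε (m + 2) + r (m + 2)) / a (m + 2) := by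
      rw [le_div_iff₀ (ha (m + 2)).1]
      have h := hrec (m + 2) (by omega) le_rfl
      rw [show m + 2 - 1 = m + 1 from rfl] at h
      nlinarith [hε (m + 1)]
    have ha1 : a (m + 1) ≠ 0 := ne_of_gt (ha (m + 1)).1
    have ha2 : a (m + 2) ≠ 0 := ne_of_gt (ha (m + 2)).1
    have e1 : (1 / a (m + 2) - 1 / a (m + 1)) * ε (m + 1) + ε (m + 1) / a (m + 1)
        = ε (m + 1) / a (m + 2) := by field_simp; ring
    have e2 : (ε (m + 1) - ε (m + 2) + r (m + 2)) / a (m + 2)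
        = ε (m + 1) / a (m + 2) - ε (m + 2) / a (m + 2) + r (m + 2) / a (m + 2) := by
      ring
    rw [show m + 1 + 1 - 1 = m + 1 from rfl] at *
    rw [show m + 1 - 1 = m from rfl] at IH
    rw [sum_Icc_succ_top (by omega : 1 ≤ m + 2) (fun t => ε (t - 1)),
        sum_Icc_succ_top (by omega : 1 ≤ m + 1) (fun t => (1 / a (t + 1) - 1 / a t) * ε t),
        sum_Icc_succ_top (by omega : 1 ≤ m + 2) (fun t => r t / a t)]
    simp only [Nat.add_sub_cancel]
    linarith
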